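/- Every path P = v₁…vₙ with an even number of edges ‖P‖ ≥ 4 admits a proper orientation with maximum in-degree at most 2 such that d⁻(v₁)=0, d⁻(v₂)=1, d⁻(v_{n−1})=1, and d⁻(vₙ)=0. -/

import Mathlib

open SimpleGraph

/-- `D` is an orientation of `G`: each edge gets exactly one direction. -/
def IsOrientation {V : Type*} (G : SimpleGraph V) (D : V → V → Prop) : Prop :=
  (∀ u v, G.Adj u v ↔ (D u v ∨ D v u)) ∧ ∀ u v, ¬(D u v ∧ D v u)

/-- In-degree of `v` in the orientation `D`. -/
noncomputable def inDeg {V : Type*} (D : V → V → Prop) (v : V) : ℕ :=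
  Nat.card {u : V // D u v}

/-- An orientation is proper if adjacent vertices have distinct in-degrees. -/
def IsProper {V : Type*} (G : SimpleGraph V) (D : V → V → Prop) : Prop :=
  ∀ u v, G.Adj u v → inDeg D u ≠ inDeg D v

/-- direction: `dir b u v` means edge from `u` to `v`. -/
def dir (n : ℕ) (b : ℕ → Bool) (u v : Fin n) : Prop :=
  (v.1 = u.1 + 1 ∧ b u.1 = true) ∨ (u.1 = v.1 + 1 ∧ b v.1 = false)

lemma dir_orientation (n : ℕ) (b : ℕ → Bool) :
    IsOrientation (SimpleGraph.pathGraph n) (dir n b) := by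
  constructor
  · intro u v
    rw [pathGraph_adj]
    unfold dir
    cases hu : b u.1 <;> cases hv : b v.1 <;> simp [hu, hv] <;> omega
  · intro u v
    unfold dir
    rintro ⟨h1 | h1, h2 | h2⟩
    · omega
    · rw [h2.2] at h1; exact absurd h1.2 (by simp)
    · rw [h1.2] at h2; exact absurd h2.2 (by simp)
    · omega

lemma inDeg_dir (n : ℕ) (b : ℕ → Bool) (v : Fin n) :
    inDeg (dir n b) v =
      (if 0 < v.1 ∧ b (v.1 - 1) = true then 1 else 0) +
      (if v.1 + 1 < n ∧ b v.1 = false then 1 else 0) := by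
  classical
  rw [inDeg, Nat.card_eq_fintype_card, Fintype.card_subtype]
  by_cases h1 : 0 < v.1 ∧ b (v.1 - 1) = true <;>
    by_cases h2 : v.1 + 1 < n ∧ b v.1 = false
  · rw [if_pos h1, if_pos h2]
    have : (Finset.univ.filter (fun u => dir n b u v)) =
        {⟨v.1 - 1, by omega⟩, ⟨v.1 + 1, by omega⟩} := by
      ext u
      rw [Finset.mem_filter]
      simp only [Finset.mem_filter, Finset.mem_univ, true_and, Finset.mem_insert,
        Finset.mem_singleton, Fin.ext_iff, dir]
      constructor
      · rintro (⟨ha, _⟩ | ⟨ha, _⟩) <;> omega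
      · rintro (h | h)
        · left; refine ⟨by omega, ?_⟩; rw [h]; exact h1.2
        · right; exact ⟨h, h2.2⟩
    rw [this]
    rw [Finset.card_insert_of_notMem
      (by simp only [Finset.mem_singleton, Fin.ext_iff]; omega), Finset.card_singleton]
  · rw [if_pos h1, if_neg h2]
    have : (Finset.univ.filter (fun u => dir n b u v)) = {⟨v.1 - 1, by omega⟩} := by
      ext u
      rw [Finset.mem_filter]
      simp only [Finset.mem_filter, Finset.mem_univ, true_and,
        Finset.mem_singleton, Fin.ext_iff, dir]
      constructor
      · rintro (⟨ha, _⟩ | ⟨ha, hb⟩)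
        · omega
        · exact absurd ⟨by omega, hb⟩ h2
      · intro h; left; refine ⟨by omega, ?_⟩; rw [h]; exact h1.2
    rw [this, Finset.card_singleton]
  · rw [if_neg h1, if_pos h2]
    have : (Finset.univ.filter (fun u => dir n b u v)) = {⟨v.1 + 1, by omega⟩} := by
      ext u
      rw [Finset.mem_filter]
      simp only [Finset.mem_filter, Finset.mem_univ, true_and,
        Finset.mem_singleton, Fin.ext_iff, dir]
      constructor
      · rintro (⟨ha, hb⟩ | ⟨ha, _⟩)
        · exfalso; apply h1; constructor
          · omega
          · have : v.1 - 1 = u.1 := by omega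
            rw [this]; exact hb
        · omega
      · intro h; right; exact ⟨h, h2.2⟩
    rw [this, Finset.card_singleton]
  · rw [if_neg h1, if_neg h2]
    have : (Finset.univ.filter (fun u => dir n b u v)) = ∅ := by
      ext u
      rw [Finset.mem_filter]
      simp only [Finset.mem_filter, Finset.mem_univ, true_and, Finset.notMem_empty,
        iff_false, dir]
      rintro (⟨ha, hb⟩ | ⟨ha, hb⟩)
      · apply h1; constructor
        · omega
        · have : v.1 - 1 = u.1 := by omega
          rw [this]; exact hb
      · exact h2 ⟨by omega, hb⟩
    rw [this, Finset.card_empty]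

/-- the chosen edge directions -/
def bfun (n : ℕ) (i : ℕ) : Bool :=
  if n % 4 = 3 ∧ n - 4 ≤ i then decide (i = n - 4) else decide (i % 4 < 2)

lemma bfun_true_iff (n i : ℕ) : bfun n i = true ↔
    ((n % 4 = 3 ∧ n - 4 ≤ i) ∧ i = n - 4) ∨ (¬(n % 4 = 3 ∧ n - 4 ≤ i) ∧ i % 4 < 2) := by
  unfold bfun
  split_ifs with h <;> simp only [decide_eq_true_eq] <;> constructor <;> intro h' <;> omega

lemma bfun_false_iff (n i : ℕ) : bfun n i = false ↔
    ¬(((n % 4 = 3 ∧ n - 4 ≤ i) ∧ i = n - 4) ∨ (¬(n % 4 = 3 ∧ n - 4 ≤ i) ∧ i % 4 < 2)) := by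
  rw [← bfun_true_iff]
  simp

set_option maxHeartbeats 1600000 in
theorem path_orientation_even_01_10 (n : ℕ) (hn : 4 ≤ n - 1) (heven : Even (n - 1)) :
    ∃ D : Fin n → Fin n → Prop,
      IsOrientation (SimpleGraph.pathGraph n) D ∧
      IsProper (SimpleGraph.pathGraph n) D ∧
      (∀ v, inDeg D v ≤ 2) ∧
      inDeg D ⟨0, by omega⟩ = 0 ∧ inDeg D ⟨1, by omega⟩ = 1 ∧
      inDeg D ⟨n - 2, by omega⟩ = 1 ∧ inDeg D ⟨n - 1, by omega⟩ = 0 := by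
  have hmod : n % 4 = 1 ∨ n % 4 = 3 := by
    obtain ⟨k, hk⟩ := heven; omega
  refine ⟨dir n (bfun n), dir_orientation n _, ?_, ?_, ?_, ?_, ?_, ?_⟩
  · intro u v huv
    rw [pathGraph_adj] at huv
    rw [inDeg_dir, inDeg_dir]
    simp only [bfun_true_iff, bfun_false_iff]
    split_ifs <;> omega
  · intro v
    rw [inDeg_dir]
    split_ifs <;> omega
  · rw [inDeg_dir]
    simp only [bfun_true_iff, bfun_false_iff]
    split_ifs <;> omega
  · rw [inDeg_dir]
    simp only [bfun_true_iff, bfun_false_iff]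
    split_ifs <;> omega
  · rw [inDeg_dir]
    simp only [bfun_true_iff, bfun_false_iff]
    split_ifs <;> omega
  · rw [inDeg_dir]
    simp only [bfun_true_iff, bfun_false_iff]
    split_ifs <;> omega
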